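/- Let n, m be integers with 2 ≤ n ≤ m, and let T_{n,m} = C_n □ C_m be the Cartesian product of the cycle graphs C_n and C_m (where C_2 denotes the complete graph on two vertices). Then T_{n,m} is a connected highly-regular graph, and T_{n,m} is a distance-regular graph if and only if (n,m) ∈ {(2,2), (2,4), (3,3), (4,4)}. -/

import Mathlib

/-- A partition of the vertex set (encoded as a cell-assignment map `P : V → Fin m`)
witnessing that `C` is a collapsed adjacency matrix at the vertex `u`:
the cell of index `0` is exactly `{u}`, every cell is nonempty, and every vertex in
cell `j` has exactly `C i j` neighbours in cell `i`. -/
def IsWitnessingPartition {V : Type*} [Fintype V] (G : SimpleGraph V) {m : ℕ}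
    (C : Fin m → Fin m → ℕ) (u : V) (P : V → Fin m) : Prop :=
  (∀ v : V, (P v : ℕ) = 0 ↔ v = u) ∧
  (∀ t : Fin m, ∃ v : V, P v = t) ∧
  (∀ (i j : Fin m) (y : V), P y = j → {z : V | P z = i ∧ G.Adj y z}.ncard = C i j)

/-- `C` is a collapsed adjacency matrix (CAM) of size `m` for `G`: `2 ≤ m`, `m < n`
(with `m = n` allowed only when `n = 2`), and every vertex admits a witnessing partition. -/
def IsCAM {V : Type*} [Fintype V] (G : SimpleGraph V) {m : ℕ}
    (C : Fin m → Fin m → ℕ) : Prop :=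
  2 ≤ m ∧ (m < Fintype.card V ∨ (m = Fintype.card V ∧ Fintype.card V = 2)) ∧
  ∀ u : V, ∃ P : V → Fin m, IsWitnessingPartition G C u P

/-- A graph is highly-regular if it admits some CAM. -/
def IsHighlyRegular {V : Type*} [Fintype V] (G : SimpleGraph V) : Prop :=
  ∃ (m : ℕ) (C : Fin m → Fin m → ℕ), IsCAM G C

/-- The index of a highly-regular graph: the least size of a CAM. -/
noncomputable def hrIndex {V : Type*} [Fintype V] (G : SimpleGraph V) : ℕ :=
  sInf {m : ℕ | ∃ C : Fin m → Fin m → ℕ, IsCAM G C}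

/-- A connected graph is distance-regular if the numbers `|D_1(v) ∩ D_{i-1}(u)|`,
`|D_1(v) ∩ D_i(u)|`, `|D_1(v) ∩ D_{i+1}(u)|` depend only on `i = d(u,v)`. -/
def IsDistanceRegular {V : Type*} [Fintype V] (G : SimpleGraph V) : Prop :=
  G.Connected ∧ ∀ i : ℕ, 1 ≤ i → i ≤ G.diam →
    ∀ j : ℕ, j = i - 1 ∨ j = i ∨ j = i + 1 →
    ∀ u v x y : V, G.dist u v = i → G.dist x y = i →
      {w : V | G.Adj v w ∧ G.dist u w = j}.ncard =
      {w : V | G.Adj y w ∧ G.dist x w = j}.ncard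

open SimpleGraph

lemma fin_sub_val {n : ℕ} (a b : Fin n) :
    (a - b).val = if b.val ≤ a.val then a.val - b.val else a.val + n - b.val := by
  have h : (a - b).val = (n - b.val + a.val) % n := by rw [Fin.sub_def]
  have hb := b.isLt
  have ha := a.isLt
  rcases le_or_gt b.val a.val with hc | hc
  · rw [if_pos hc, h, show n - b.val + a.val = n + (a.val - b.val) by omega,
      Nat.add_mod_left, Nat.mod_eq_of_lt (by omega)]
  · rw [if_neg (by omega), h, Nat.mod_eq_of_lt (by omega)]
    omega

lemma fin_add_val {n : ℕ} (a b : Fin n) : (a + b).val = (a.val + b.val) % n := by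
  rw [Fin.add_def]

lemma fin_one_val {n : ℕ} (hn : 2 ≤ n) [NeZero n] : (1 : Fin n).val = 1 := by
  rw [Fin.val_one', Nat.mod_eq_of_lt (by omega)]

/-- lower bound along walks -/
lemma walk_lower {V : Type*} (G : SimpleGraph V) (f : V → ℕ)
    (hf : ∀ a b : V, G.Adj a b → f b ≤ f a + 1) {u v : V} (w : G.Walk u v) :
    f v ≤ f u + w.length := by
  induction w with
  | nil => simp
  | cons h p ih =>
    calc f _ ≤ _ + p.length := ih
    _ ≤ (f _ + 1) + p.length := by gcongr; exact hf _ _ h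
    _ = f _ + (p.length + 1) := by ring
    _ = _ := by rw [Walk.length_cons]

lemma cycle_connected {n : ℕ} (hn : 1 ≤ n) : (cycleGraph n).Connected := by
  obtain ⟨k, rfl⟩ : ∃ k, n = k + 1 := ⟨n - 1, by omega⟩
  exact cycleGraph_connected

/-- circular distance of a difference -/
def gmin (n : ℕ) (d : Fin n) : ℕ := min d.val (n - d.val)

lemma fval_eq_gmin {n : ℕ} [NeZero n] (u x : Fin n) :
    min (x - u).val (u - x).val = gmin n (x - u) := by
  unfold gmin
  by_cases h : x = u
  · subst h
    simp [sub_self]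
  · have h1 := fin_sub_val x u
    have h2 := fin_sub_val u x
    have hx := x.isLt; have hu := u.isLt
    have hne : x.val ≠ u.val := fun hc => h (Fin.ext hc)
    split_ifs at h1 h2 <;> omega

lemma gmin_step_add {n : ℕ} (hn : 2 ≤ n) [NeZero n] (d : Fin n) :
    gmin n (d + 1) ≤ gmin n d + 1 := by
  unfold gmin
  have h1 := fin_one_val hn
  have hd := d.isLt
  have h := fin_add_val d 1
  rw [h1] at h
  by_cases hc : d.val + 1 = n
  · rw [hc, Nat.mod_self] at h
    omega
  · rw [Nat.mod_eq_of_lt (by omega)] at h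
    omega

lemma gmin_step_sub {n : ℕ} (hn : 2 ≤ n) [NeZero n] (d : Fin n) :
    gmin n (d - 1) ≤ gmin n d + 1 := by
  unfold gmin
  have h1 := fin_one_val hn
  have hd := d.isLt
  have h := fin_sub_val d 1
  rw [h1] at h
  split_ifs at h <;> omega

lemma fin_sub_val_one_iff {n : ℕ} (hn : 2 ≤ n) [NeZero n] {a b : Fin n} :
    (a - b).val = 1 ↔ a = b + 1 := by
  constructor
  · intro h
    have : a - b = 1 := Fin.ext (by rw [h, fin_one_val hn])
    rw [sub_eq_iff_eq_add] at this
    rw [this, add_comm]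
  · rintro rfl
    rw [show b + 1 - b = 1 by abel, fin_one_val hn]

lemma cycle_adj {n : ℕ} (hn : 2 ≤ n) [NeZero n] {a b : Fin n} :
    (cycleGraph n).Adj a b ↔ a = b + 1 ∨ b = a + 1 := by
  rw [cycleGraph_adj', fin_sub_val_one_iff hn, fin_sub_val_one_iff hn]

lemma cycle_dist {n : ℕ} (hn : 2 ≤ n) (u v : Fin n) :
    (cycleGraph n).dist u v = gmin n (v - u) := by
  haveI : NeZero n := ⟨by omega⟩
  have hconn := cycle_connected (n := n) (by omega)
  have h1 := fin_one_val (n := n) hn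
  have key : ∀ (k : ℕ) (u v : Fin n), (v - u).val = k → (cycleGraph n).dist u v ≤ k := by
    intro k
    induction k with
    | zero =>
      intro u v h
      have : v = u := by
        have h2 := fin_sub_val v u
        rw [h] at h2
        have hv := v.isLt; have hu := u.isLt
        apply Fin.ext
        split_ifs at h2 <;> omega
    
      subst this; simp
    | succ k ih =>
      intro u v h
      have hadj : (cycleGraph n).Adj u (u + 1) := by
        rw [cycle_adj hn]; right; rfl
      have hs : (v - (u + 1)).val = k := by
        have hh : v - (u + 1) = (v - u) - 1 := by abel
        have hlt : k + 1 < n := h ▸ (v - u).isLt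
        rw [hh, fin_sub_val, h1, h, if_pos (by omega)]
        omega
      calc (cycleGraph n).dist u v ≤ _ + _ := hconn.dist_triangle (v := u + 1)
        _ ≤ 1 + k := by
            gcongr
            · exact (dist_eq_one_iff_adj.mpr hadj).le
            · exact ih _ _ hs
        _ = k + 1 := by omega
  apply le_antisymm
  · rw [← fval_eq_gmin]
    rcases min_cases (v - u).val (u - v).val with ⟨hm, _⟩ | ⟨hm, _⟩
    · rw [hm]; exact key _ u v rfl
    · rw [hm, SimpleGraph.dist_comm]; exact key _ v u rfl
  · obtain ⟨w, hw⟩ := hconn.exists_walk_length_eq_dist u v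
    have step : ∀ a b : Fin n, (cycleGraph n).Adj a b →
        gmin n (b - u) ≤ gmin n (a - u) + 1 := by
      intro a b hab
      rw [cycle_adj hn] at hab
      rcases hab with h | h
      · rw [h, show b - u = ((b + 1 - u) - 1) by abel]
        exact gmin_step_sub hn _
      · rw [h, show a + 1 - u = ((a - u) + 1) by abel]
        exact gmin_step_add hn _
    have := walk_lower (cycleGraph n) (fun x => gmin n (x - u)) step w
    simp only [sub_self] at this
    have h0 : gmin n 0 = 0 := by unfold gmin; simp
    rw [h0, hw, zero_add] at this
    exact this
open SimpleGraph

lemma boxProd_dist {α β : Type*} {G : SimpleGraph α} {H : SimpleGraph β}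
    (hG : G.Connected) (hH : H.Connected) (u v : α × β) :
    (G □ H).dist u v = G.dist u.1 v.1 + H.dist u.2 v.2 := by
  obtain ⟨u1, u2⟩ := u; obtain ⟨v1, v2⟩ := v
  apply le_antisymm
  · obtain ⟨w1, hw1⟩ := hG.exists_walk_length_eq_dist u1 v1
    obtain ⟨w2, hw2⟩ := hH.exists_walk_length_eq_dist u2 v2
    have := SimpleGraph.dist_le ((w1.boxProdLeft H u2).append (w2.boxProdRight G v1))
    rw [Walk.length_append] at this
    have l1 : (w1.boxProdLeft H u2).length = w1.length := Walk.length_map _ _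
    have l2 : (w2.boxProdRight G v1).length = w2.length := Walk.length_map _ _
    rw [l1, l2] at this
    simpa [Walk.length_append, Walk.length_map, Walk.boxProdLeft, Walk.boxProdRight, hw1, hw2] using this
  · obtain ⟨w, hw⟩ := ((hG.boxProd hH).exists_walk_length_eq_dist (u1,u2) (v1,v2))
    have step : ∀ a b : α × β, (G □ H).Adj a b →
        G.dist u1 b.1 + H.dist u2 b.2 ≤ (G.dist u1 a.1 + H.dist u2 a.2) + 1 := by
      rintro ⟨a1,a2⟩ ⟨b1,b2⟩ hab
      rcases boxProd_adj.mp hab with ⟨h, rfl⟩ | ⟨h, rfl⟩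
      · have : G.dist u1 b1 ≤ G.dist u1 a1 + 1 :=
          le_trans (hG.dist_triangle) (by rw [dist_eq_one_iff_adj.mpr h])
        simpa using by omega
      · have : H.dist u2 b2 ≤ H.dist u2 a2 + 1 :=
          le_trans (hH.dist_triangle) (by rw [dist_eq_one_iff_adj.mpr h])
        simpa using by omega
    have := walk_lower (G □ H) (fun x => G.dist u1 x.1 + H.dist u2 x.2) step w
    rw [hw] at this
    simpa [SimpleGraph.dist_self] using this
open SimpleGraph

def tDist (n m : ℕ) (a b : Fin n × Fin m) : ℕ := gmin n (b.1 - a.1) + gmin m (b.2 - a.2)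

lemma torus_dist {n m : ℕ} (hn : 2 ≤ n) (hm : 2 ≤ m) (a b : Fin n × Fin m) :
    ((cycleGraph n) □ (cycleGraph m)).dist a b = tDist n m a b := by
  rw [boxProd_dist (cycle_connected (by omega)) (cycle_connected (by omega)),
    cycle_dist hn, cycle_dist hm, tDist]

lemma gmin_le_half {n : ℕ} (hn : 1 ≤ n) (d : Fin n) : gmin n d ≤ n / 2 := by
  have := d.isLt; unfold gmin; omega

lemma ediam_le_of_dist {V : Type*} {G : SimpleGraph V} (hconn : G.Connected) {D : ℕ}
    (h : ∀ u v : V, G.dist u v ≤ D) : G.ediam ≤ (D : ℕ∞) := by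
  apply ediam_le_of_edist_le
  intro u v
  obtain ⟨w, hw⟩ := hconn.exists_walk_length_eq_dist u v
  calc G.edist u v ≤ (w.length : ℕ∞) := edist_le w
    _ ≤ (D : ℕ∞) := Nat.cast_le.mpr (hw ▸ h u v)

lemma ediam_ne_top_of_dist {V : Type*} {G : SimpleGraph V} (hconn : G.Connected) {D : ℕ}
    (h : ∀ u v : V, G.dist u v ≤ D) : G.ediam ≠ ⊤ := by
  intro hc
  have := ediam_le_of_dist hconn h
  rw [hc] at this
  exact (ENat.coe_lt_top D).not_ge this

lemma diam_le_of_dist {V : Type*} {G : SimpleGraph V} (hconn : G.Connected) {D : ℕ}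
    (h : ∀ u v : V, G.dist u v ≤ D) : G.diam ≤ D := by
  have := ediam_le_of_dist hconn h
  simpa [SimpleGraph.diam] using ENat.toNat_le_toNat this (by simp)

lemma torus_dist_le {n m : ℕ} (hn : 2 ≤ n) (hm : 2 ≤ m) (u v : Fin n × Fin m) :
    ((cycleGraph n) □ (cycleGraph m)).dist u v ≤ n / 2 + m / 2 := by
  rw [torus_dist hn hm]
  exact Nat.add_le_add (gmin_le_half (by omega) _) (gmin_le_half (by omega) _)

lemma torus_connected {n m : ℕ} (hn : 2 ≤ n) (hm : 2 ≤ m) :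
    ((cycleGraph n) □ (cycleGraph m)).Connected :=
  (cycle_connected (by omega)).boxProd (cycle_connected (by omega))

lemma torus_diam_lb {n m : ℕ} (hn : 2 ≤ n) (hm : 2 ≤ m) (u v : Fin n × Fin m) :
    ((cycleGraph n) □ (cycleGraph m)).dist u v ≤ ((cycleGraph n) □ (cycleGraph m)).diam :=
  dist_le_diam (ediam_ne_top_of_dist (torus_connected hn hm) (torus_dist_le hn hm))

open SimpleGraph

lemma fin_val_zero_iff {M : ℕ} [NeZero M] (a : Fin M) : a.val = 0 ↔ a = 0 := by
  constructor
  · intro h; apply Fin.ext; simp [h]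
  · rintro rfl; simp

lemma hr_of_aut {V : Type*} [Fintype V] (G : SimpleGraph V) (u0 : V) (M : ℕ) [NeZero M] (hM : 2 ≤ M)
    (hcard : M < Fintype.card V ∨ (M = Fintype.card V ∧ Fintype.card V = 2))
    (e : V → Fin M)
    (h0 : ∀ v, e v = 0 ↔ v = u0)
    (hsurj : Function.Surjective e)
    (hcell : ∀ y z : V, e y = e z → ∃ φ : G ≃g G, φ y = z ∧ ∀ w, e (φ w) = e w)
    (htrans : ∀ u : V, ∃ τ : G ≃g G, τ u = u0) :
    IsHighlyRegular G := by
  classical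
  choose rep hrep using hsurj
  refine ⟨M, fun i j => {z : V | e z = i ∧ G.Adj (rep j) z}.ncard, hM, hcard, ?_⟩
  intro u
  obtain ⟨τ, hτ⟩ := htrans u
  refine ⟨fun v => e (τ v), ?_, ?_, ?_⟩
  · intro v
    rw [fin_val_zero_iff, h0, hτ.symm]
    exact ⟨fun h => τ.injective h, fun h => by rw [h]⟩
  · intro t
    exact ⟨τ.symm (rep t), by simp [hrep]⟩
  · intro i j y hy
    have hy' : e (τ y) = j := hy
    show {z : V | e (τ z) = i ∧ G.Adj y z}.ncard = {z : V | e z = i ∧ G.Adj (rep j) z}.ncard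
    have step1 : {z : V | e (τ z) = i ∧ G.Adj y z}.ncard
        = {w : V | e w = i ∧ G.Adj (τ y) w}.ncard := by
      rw [← Set.ncard_image_of_injective {z : V | e (τ z) = i ∧ G.Adj y z} τ.injective]
      congr 1
      ext w
      constructor
      · rintro ⟨z, ⟨hz1, hz2⟩, rfl⟩
        exact ⟨hz1, (Iso.map_adj_iff τ).mpr hz2⟩
      · rintro ⟨hw1, hw2⟩
        refine ⟨τ.symm w, ⟨?_, ?_⟩, τ.apply_symm_apply w⟩
        · rw [τ.apply_symm_apply]; exact hw1
        · have := (Iso.map_adj_iff τ (v := y) (w := τ.symm w))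
          rw [τ.apply_symm_apply] at this
          exact this.mp hw2
    rw [step1]
    obtain ⟨φ, hφ1, hφ2⟩ := hcell (rep j) (τ y) (by rw [hrep, hy'])
    rw [← Set.ncard_image_of_injective {z : V | e z = i ∧ G.Adj (rep j) z} φ.injective]
    congr 1
    ext w
    constructor
    · rintro ⟨hw1, hw2⟩
      refine ⟨φ.symm w, ⟨?_, ?_⟩, φ.apply_symm_apply w⟩
      · rw [← hφ2 (φ.symm w), φ.apply_symm_apply]; exact hw1
      · have := (Iso.map_adj_iff φ (v := rep j) (w := φ.symm w))
        rw [φ.apply_symm_apply, hφ1] at this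
        exact this.mp hw2
    · rintro ⟨z, ⟨hz1, hz2⟩, rfl⟩
      refine ⟨by rw [hφ2, hz1], ?_⟩
      rw [← hφ1]
      exact (Iso.map_adj_iff φ).mpr hz2
open SimpleGraph

def cycTrans {n : ℕ} [NeZero n] (a : Fin n) : cycleGraph n ≃g cycleGraph n where
  toEquiv := Equiv.addRight a
  map_rel_iff' := by
    intro x y
    simp only [Equiv.coe_addRight, cycleGraph_adj']
    rw [show x + a - (y + a) = x - y by abel, show y + a - (x + a) = y - x by abel]

def cycNeg {n : ℕ} [NeZero n] : cycleGraph n ≃g cycleGraph n where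
  toEquiv := Equiv.neg (Fin n)
  map_rel_iff' := by
    intro x y
    simp only [Equiv.neg_apply, cycleGraph_adj']
    rw [show -x - -y = y - x by abel, show -y - -x = x - y by abel]
    exact or_comm

def boxIso {α β : Type*} {G : SimpleGraph α} {H : SimpleGraph β}
    (φ : G ≃g G) (ψ : H ≃g H) : (G □ H) ≃g (G □ H) where
  toEquiv := Equiv.prodCongr φ.toEquiv ψ.toEquiv
  map_rel_iff' := by
    rintro ⟨a1, a2⟩ ⟨b1, b2⟩
    show (G □ H).Adj (φ a1, ψ a2) (φ b1, ψ b2) ↔ _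
    rw [boxProd_adj, boxProd_adj, Iso.map_adj_iff, Iso.map_adj_iff,
      EmbeddingLike.apply_eq_iff_eq, EmbeddingLike.apply_eq_iff_eq]

lemma gmin_eq_zero_iff {n : ℕ} (hn : 1 ≤ n) [NeZero n] (x : Fin n) :
    gmin n x = 0 ↔ x = 0 := by
  unfold gmin
  have := x.isLt
  constructor
  · intro h; apply Fin.ext; simp only [Fin.val_zero]; omega
  · rintro rfl; simp

lemma gmin_neg {n : ℕ} [NeZero n] (x : Fin n) : gmin n (-x) = gmin n x := by
  unfold gmin
  have h : (-x) = 0 - x := by abel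
  have := fin_sub_val (0 : Fin n) x
  rw [h]
  have h0 : (0 : Fin n).val = 0 := rfl
  rw [h0] at this
  have := x.isLt
  have := (fin_sub_val (0 : Fin n) x)
  split_ifs at this with hc
  · have hx : x.val = 0 := by omega
    rw [this]; omega
  · rw [this]; omega

lemma gmin_eq_cases {n : ℕ} [NeZero n] (x y : Fin n) (h : gmin n x = gmin n y) :
    y = x ∨ y = -x := by
  unfold gmin at h
  have hx := x.isLt
  have hy := y.isLt
  have hneg : ∀ z : Fin n, (-z).val = if z.val = 0 then 0 else n - z.val := by
    intro z
    have h1 := fin_sub_val (0 : Fin n) z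
    have h0 : (0 : Fin n).val = 0 := rfl
    rw [h0] at h1
    rw [show -z = 0 - z by abel, h1]
    have := z.isLt
    split_ifs <;> omega
  by_cases hc : y.val = x.val
  · left; exact Fin.ext hc
  · right
    apply Fin.ext
    rw [hneg x]
    split_ifs with h0 <;> omega
open SimpleGraph

lemma torus_trans {n m : ℕ} [NeZero n] [NeZero m] (u : Fin n × Fin m) :
    ∃ τ : (cycleGraph n □ cycleGraph m) ≃g (cycleGraph n □ cycleGraph m),
      τ u = ((0 : Fin n), (0 : Fin m)) := by
  refine ⟨boxIso (cycTrans (-u.1)) (cycTrans (-u.2)), ?_⟩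
  show (u.1 + -u.1, u.2 + -u.2) = ((0 : Fin n), (0 : Fin m))
  rw [add_neg_cancel, add_neg_cancel]

def torusE (n m : ℕ) (v : Fin n × Fin m) : Fin ((n/2+1) * (m/2+1)) :=
  finProdFinEquiv (⟨gmin n v.1 % (n/2+1), Nat.mod_lt _ (Nat.succ_pos _)⟩,
    ⟨gmin m v.2 % (m/2+1), Nat.mod_lt _ (Nat.succ_pos _)⟩)

lemma finProdFin_val {a b : ℕ} (x : Fin a) (y : Fin b) :
    (finProdFinEquiv (x, y)).val = y.val + b * x.val := by
  simp [finProdFinEquiv]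

lemma torusE_val {n m : ℕ} (hn : 1 ≤ n) (hm : 1 ≤ m) (v : Fin n × Fin m) :
    (torusE n m v).val = gmin m v.2 % (m/2+1) + (m/2+1) * (gmin n v.1 % (n/2+1)) :=
  finProdFin_val _ _

lemma gmin_mod {n : ℕ} (hn : 1 ≤ n) (x : Fin n) : gmin n x % (n/2+1) = gmin n x :=
  Nat.mod_eq_of_lt (by have := gmin_le_half hn x; omega)

lemma torusE_val' {n m : ℕ} (hn : 1 ≤ n) (hm : 1 ≤ m) (v : Fin n × Fin m) :
    (torusE n m v).val = gmin m v.2 + (m/2+1) * gmin n v.1 := by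
  rw [torusE_val hn hm, gmin_mod hn, gmin_mod hm]

lemma add_mul_inj {B x1 y1 x2 y2 : ℕ} (hx : x1 < B) (hy : y1 < B)
    (h : x1 + B * x2 = y1 + B * y2) : x1 = y1 ∧ x2 = y2 := by
  have h1 : x1 = y1 := by
    have e1 : (x1 + B * x2) % B = x1 := by
      rw [Nat.add_mul_mod_self_left, Nat.mod_eq_of_lt hx]
    have e2 : (y1 + B * y2) % B = y1 := by
      rw [Nat.add_mul_mod_self_left, Nat.mod_eq_of_lt hy]
    rw [← e1, ← e2, h]
  refine ⟨h1, ?_⟩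
  subst h1
  have hB : 0 < B := by omega
  have : B * x2 = B * y2 := by omega
  exact Nat.eq_of_mul_eq_mul_left hB this

def e22 : Fin 2 × Fin 2 → Fin 3 := fun v => ⟨v.1.val + v.2.val, by omega⟩

lemma e22_zero : ∀ v, e22 v = 0 ↔ v = ((0 : Fin 2), (0 : Fin 2)) := by decide
lemma e22_surj : Function.Surjective e22 := by decide
lemma e22_swap : ∀ y z : Fin 2 × Fin 2, e22 y = e22 z → ¬ y = z → Prod.swap y = z := by decide
lemma e22_pres : ∀ w : Fin 2 × Fin 2, e22 (Prod.swap w) = e22 w := by decide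

lemma torus_hr {n m : ℕ} (hn : 2 ≤ n) (hm : 2 ≤ m) :
    IsHighlyRegular ((cycleGraph n) □ (cycleGraph m)) := by
  haveI : NeZero n := ⟨by omega⟩
  haveI : NeZero m := ⟨by omega⟩
  by_cases hspec : n = 2 ∧ m = 2
  · obtain ⟨hn2, hm2⟩ := hspec
    subst hn2; subst hm2
    refine hr_of_aut _ ((0,0) : Fin 2 × Fin 2) 3 (by omega) ?_
      e22 e22_zero e22_surj ?_ torus_trans
    · left; simp only [Fintype.card_prod, Fintype.card_fin]; omega
    · intro y z h
      by_cases hyz : y = z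
      · exact ⟨Iso.refl, by rw [hyz]; rfl, fun w => rfl⟩
      · refine ⟨boxProdComm (cycleGraph 2) (cycleGraph 2), ?_, ?_⟩
        · show Prod.swap y = z
          exact e22_swap y z h hyz
        · intro w
          show e22 (Prod.swap w) = e22 w
          exact e22_pres w
  · -- generic case
    have hval := torusE_val' (n := n) (m := m) (by omega) (by omega)
    refine hr_of_aut _ ((0,0) : Fin n × Fin m) ((n/2+1) * (m/2+1)) ?_ ?_ (torusE n m)
      ?_ ?_ ?_ torus_trans
    · have : 2 * 2 ≤ (n/2+1) * (m/2+1) := Nat.mul_le_mul (by omega) (by omega)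
      omega
    · left
      rw [Fintype.card_prod, Fintype.card_fin, Fintype.card_fin]
      rcases Nat.lt_or_ge n 3 with h3 | h3
      · have hn2 : n = 2 := by omega
        have hm3 : 3 ≤ m := by
          rcases Nat.lt_or_ge m 3 with h | h
          · exact absurd ⟨hn2, by omega⟩ hspec
          · exact h
        subst hn2
        norm_num
        omega
      · calc (n/2+1) * (m/2+1) < n * (m/2+1) :=
              Nat.mul_lt_mul_of_pos_right (by omega) (by omega)
          _ ≤ n * m := Nat.mul_le_mul (le_refl n) (by omega)
    · rintro ⟨v1, v2⟩
      rw [← fin_val_zero_iff, hval]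
      have g1 : gmin n v1 = 0 ↔ v1 = 0 := gmin_eq_zero_iff (by omega) v1
      have g2 : gmin m v2 = 0 ↔ v2 = 0 := gmin_eq_zero_iff (by omega) v2
      simp only
      constructor
      · intro h
        obtain ⟨ha, hb⟩ := Nat.add_eq_zero.mp h
        rcases Nat.mul_eq_zero.mp hb with h' | h'
        · omega
        · rw [Prod.mk.injEq]
          exact ⟨g1.mp h', g2.mp ha⟩
      · intro h
        rw [Prod.mk.injEq] at h
        obtain ⟨rfl, rfl⟩ := h
        rw [g1.mpr rfl, g2.mpr rfl]
        simp
    · intro t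
      set p := finProdFinEquiv.symm t with hp
      have hp1 : p.1.val ≤ n / 2 := by have := p.1.isLt; omega
      have hp2 : p.2.val ≤ m / 2 := by have := p.2.isLt; omega
      have hb1 : p.1.val < n := by omega
      have hb2 : p.2.val < m := by omega
      refine ⟨((⟨p.1.val, hb1⟩ : Fin n), (⟨p.2.val, hb2⟩ : Fin m)), ?_⟩
      have g1 : gmin n (⟨p.1.val, hb1⟩ : Fin n) = p.1.val := by
        unfold gmin; simp only; omega
      have g2 : gmin m (⟨p.2.val, hb2⟩ : Fin m) = p.2.val := by
        unfold gmin; simp only; omega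
      have hval2 := finProdFin_val p.1 p.2
      have hpp : (p.1, p.2) = p := rfl
      rw [hpp] at hval2
      have ht : finProdFinEquiv p = t := Equiv.apply_symm_apply _ t
      apply Fin.ext
      rw [hval]
      simp only
      rw [g1, g2, ← ht, hval2]
    · rintro ⟨y1, y2⟩ ⟨z1, z2⟩ h
      have hv := congrArg Fin.val h
      rw [hval, hval] at hv
      simp only at hv
      have hb1 : gmin m y2 < m/2+1 := by have := gmin_le_half (n := m) (by omega) y2; omega
      have hb2 : gmin m z2 < m/2+1 := by have := gmin_le_half (n := m) (by omega) z2; omega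
      obtain ⟨h2, h1⟩ := add_mul_inj hb1 hb2 hv
      have c1 := gmin_eq_cases y1 z1 h1
      have c2 := gmin_eq_cases y2 z2 h2
      have epres : ∀ (φ1 : cycleGraph n ≃g cycleGraph n) (φ2 : cycleGraph m ≃g cycleGraph m),
          (∀ x, gmin n (φ1 x) = gmin n x) → (∀ x, gmin m (φ2 x) = gmin m x) →
          ∀ w, torusE n m (boxIso φ1 φ2 w) = torusE n m w := by
        intro φ1 φ2 hg1 hg2 w
        apply Fin.ext
        rw [hval, hval]
        show gmin m (φ2 w.2) + (m/2+1) * gmin n (φ1 w.1) = _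
        rw [hg1, hg2]
      rcases c1 with rfl | rfl <;> rcases c2 with rfl | rfl
      · exact ⟨boxIso Iso.refl Iso.refl, rfl, epres _ _ (fun _ => rfl) (fun _ => rfl)⟩
      · exact ⟨boxIso Iso.refl cycNeg, rfl, epres _ _ (fun _ => rfl) (fun x => gmin_neg x)⟩
      · exact ⟨boxIso cycNeg Iso.refl, rfl, epres _ _ (fun x => gmin_neg x) (fun _ => rfl)⟩
      · exact ⟨boxIso cycNeg cycNeg, rfl, epres _ _ (fun x => gmin_neg x) (fun x => gmin_neg x)⟩
open SimpleGraph

def cnt (n m : ℕ) (u v : Fin n × Fin m) (j : ℕ) : ℕ :=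
  (Finset.univ.filter (fun w : Fin n × Fin m => tDist n m v w = 1 ∧ tDist n m u w = j)).card

lemma ncard_filter {V : Type*} [Fintype V] (p : V → Prop) [DecidablePred p] :
    {w : V | p w}.ncard = (Finset.univ.filter p).card := by
  rw [← Set.ncard_coe_finset]
  congr 1
  ext w
  simp

lemma torus_set_eq {n m : ℕ} (hn : 2 ≤ n) (hm : 2 ≤ m) (u v : Fin n × Fin m) (j : ℕ) :
    {w : Fin n × Fin m | (cycleGraph n □ cycleGraph m).Adj v w ∧
      (cycleGraph n □ cycleGraph m).dist u w = j}.ncard = cnt n m u v j := by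
  have hs : {w : Fin n × Fin m | (cycleGraph n □ cycleGraph m).Adj v w ∧
      (cycleGraph n □ cycleGraph m).dist u w = j}
      = {w | tDist n m v w = 1 ∧ tDist n m u w = j} := by
    ext w
    rw [Set.mem_setOf_eq, Set.mem_setOf_eq, ← dist_eq_one_iff_adj,
      torus_dist hn hm, torus_dist hn hm]
  rw [hs, cnt, ncard_filter]

lemma dr_of_key {n m : ℕ} (hn : 2 ≤ n) (hm : 2 ≤ m) (D : ℕ) (F : ℕ → ℕ → ℕ)
    (hdiam : ∀ u v : Fin n × Fin m, tDist n m u v ≤ D)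
    (key : ∀ j < D + 2, ∀ u v : Fin n × Fin m, cnt n m u v j = F (tDist n m u v) j) :
    IsDistanceRegular (cycleGraph n □ cycleGraph m) := by
  refine ⟨torus_connected hn hm, ?_⟩
  intro i hi1 hi2 j hj u v x y huv hxy
  have hdist : ∀ a b : Fin n × Fin m, (cycleGraph n □ cycleGraph m).dist a b = tDist n m a b :=
    torus_dist hn hm
  have hdle : (cycleGraph n □ cycleGraph m).diam ≤ D :=
    diam_le_of_dist (torus_connected hn hm) (fun a b => by rw [hdist]; exact hdiam a b)
  have hjD : j < D + 2 := by rcases hj with rfl | rfl | rfl <;> omega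
  rw [torus_set_eq hn hm, torus_set_eq hn hm, key j hjD u v, key j hjD x y,
    ← hdist, ← hdist, huv, hxy]

def F22 : ℕ → ℕ → ℕ
  | 0,1 => 2 | 1,0 => 1 | 1,2 => 1 | 2,1 => 2 | _,_ => 0

def F24 : ℕ → ℕ → ℕ
  | 0,1 => 3 | 1,0 => 1 | 1,2 => 2 | 2,1 => 2 | 2,3 => 1 | 3,2 => 3 | _,_ => 0

def F33 : ℕ → ℕ → ℕ
  | 0,1 => 4 | 1,0 => 1 | 1,1 => 1 | 1,2 => 2 | 2,1 => 2 | 2,2 => 2 | _,_ => 0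

def F44 : ℕ → ℕ → ℕ
  | 0,1 => 4 | 1,0 => 1 | 1,2 => 3 | 2,1 => 2 | 2,3 => 2 | 3,2 => 3 | 3,4 => 1 | 4,3 => 4
  | _,_ => 0

set_option maxRecDepth 40000 in
lemma dr22 : IsDistanceRegular (cycleGraph 2 □ cycleGraph 2) :=
  dr_of_key (by omega) (by omega) 2 F22 (by decide) (by decide)

set_option maxRecDepth 40000 in
lemma dr24 : IsDistanceRegular (cycleGraph 2 □ cycleGraph 4) :=
  dr_of_key (by omega) (by omega) 3 F24 (by decide) (by decide)

set_option maxRecDepth 40000 in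
lemma dr33 : IsDistanceRegular (cycleGraph 3 □ cycleGraph 3) :=
  dr_of_key (by omega) (by omega) 2 F33 (by decide) (by decide)

set_option maxRecDepth 40000 in
lemma dr44 : IsDistanceRegular (cycleGraph 4 □ cycleGraph 4) :=
  dr_of_key (by omega) (by omega) 4 F44 (by decide) (by decide)
open SimpleGraph

lemma not_dr_concrete {n m : ℕ} (hn : 2 ≤ n) (hm : 2 ≤ m) (i j : ℕ) (hi : 1 ≤ i)
    (hj : j = i - 1 ∨ j = i ∨ j = i + 1) (u v x y : Fin n × Fin m)
    (huv : tDist n m u v = i) (hxy : tDist n m x y = i)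
    (hne : cnt n m u v j ≠ cnt n m x y j) :
    ¬ IsDistanceRegular (cycleGraph n □ cycleGraph m) := by
  rintro ⟨hconn, h⟩
  have hd : ∀ a b : Fin n × Fin m, (cycleGraph n □ cycleGraph m).dist a b = tDist n m a b :=
    torus_dist hn hm
  have hduv : (cycleGraph n □ cycleGraph m).dist u v = i := by rw [hd]; exact huv
  have hdxy : (cycleGraph n □ cycleGraph m).dist x y = i := by rw [hd]; exact hxy
  have hidiam : i ≤ (cycleGraph n □ cycleGraph m).diam := hduv ▸ torus_diam_lb hn hm u v
  have := h i hi hidiam j hj u v x y hduv hdxy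
  rw [torus_set_eq hn hm, torus_set_eq hn hm] at this
  exact hne this

lemma not_dr23 : ¬ IsDistanceRegular (cycleGraph 2 □ cycleGraph 3) :=
  not_dr_concrete (by omega) (by omega) 1 1 (by omega) (by right; left; rfl)
    (0,0) (1,0) (0,0) (0,1) (by decide) (by decide) (by decide)

lemma not_dr34 : ¬ IsDistanceRegular (cycleGraph 3 □ cycleGraph 4) :=
  not_dr_concrete (by omega) (by omega) 2 2 (by omega) (by right; left; rfl)
    (0,0) (1,1) (0,0) (0,2) (by decide) (by decide) (by decide)
open SimpleGraph

section M5
variable {n m : ℕ}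

lemma not_dr_m5 (hn : 2 ≤ n) (hm : 5 ≤ m) :
    ¬ IsDistanceRegular (cycleGraph n □ cycleGraph m) := by
  haveI : NeZero n := ⟨by omega⟩
  haveI : NeZero m := ⟨by omega⟩
  have h1n : (1 : Fin n).val = 1 := fin_one_val hn
  have h1m : (1 : Fin m).val = 1 := fin_one_val (by omega)
  have h0n : (0 : Fin n).val = 0 := rfl
  have h0m : (0 : Fin m).val = 0 := rfl
  set c2 : Fin m := ⟨2, by omega⟩ with hc2
  apply not_dr_concrete hn (by omega) 2 1 (by omega) (by left; rfl)
    (0,0) (1,1) (0,0) (0, c2)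
  · -- tDist (0,0) (1,1) = 2
    show gmin n (1 - 0) + gmin m (1 - 0) = 2
    rw [sub_zero, sub_zero]
    unfold gmin
    rw [h1n, h1m]
    omega
  · show gmin n (0 - 0) + gmin m (c2 - 0) = 2
    rw [sub_zero, sub_zero]
    unfold gmin
    rw [h0n]
    show min 0 (n - 0) + min 2 (m - 2) = 2
    omega
  · -- counts differ
    have hA : (Finset.univ.filter (fun w : Fin n × Fin m =>
        tDist n m (1,1) w = 1 ∧ tDist n m (0,0) w = 1))
        = {((0 : Fin n), (1 : Fin m)), ((1 : Fin n), (0 : Fin m))} := by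
      ext ⟨w1, w2⟩
      have ha := w1.isLt
      have hb := w2.isLt
      simp only [Finset.mem_filter, Finset.mem_univ, true_and, Finset.mem_insert,
        Finset.mem_singleton, Prod.mk.injEq, tDist, gmin, fin_sub_val, h1n, h1m, h0n, h0m,
        sub_zero, Fin.ext_iff]
      split_ifs <;> omega
    have hB : (Finset.univ.filter (fun w : Fin n × Fin m =>
        tDist n m (0, c2) w = 1 ∧ tDist n m (0,0) w = 1))
        = {((0 : Fin n), (1 : Fin m))} := by
      ext ⟨w1, w2⟩
      have ha := w1.isLt
      have hb := w2.isLt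
      simp only [Finset.mem_filter, Finset.mem_univ, true_and,
        Finset.mem_singleton, Prod.mk.injEq, tDist, gmin, fin_sub_val, h1n, h1m, h0n, h0m,
        hc2, sub_zero, Fin.ext_iff]
      split_ifs <;> omega
    have hne : ((0 : Fin n), (1 : Fin m)) ≠ ((1 : Fin n), (0 : Fin m)) := by
      intro hc
      rw [Prod.mk.injEq] at hc
      have := congrArg Fin.val hc.1
      rw [h0n, h1n] at this
      omega
    rw [cnt, cnt, hA, hB, Finset.card_pair hne, Finset.card_singleton]
    omega

end M5

/-- For `2 ≤ n ≤ m`, the torus graph `T_{n,m} = C_n □ C_m` is a connected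
highly-regular graph, and it is distance-regular iff
`(n,m) ∈ {(2,2), (2,4), (3,3), (4,4)}`. -/
theorem stmt15 (n m : ℕ) (hn : 2 ≤ n) (hnm : n ≤ m) :
    ((SimpleGraph.cycleGraph n).boxProd (SimpleGraph.cycleGraph m)).Connected ∧
    IsHighlyRegular ((SimpleGraph.cycleGraph n).boxProd (SimpleGraph.cycleGraph m)) ∧
    (IsDistanceRegular ((SimpleGraph.cycleGraph n).boxProd (SimpleGraph.cycleGraph m)) ↔
      ((n = 2 ∧ m = 2) ∨ (n = 2 ∧ m = 4) ∨ (n = 3 ∧ m = 3) ∨ (n = 4 ∧ m = 4))) := by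
  
  have hm : 2 ≤ m := le_trans hn hnm
  refine ⟨torus_connected hn hm, torus_hr hn hm, ?_, ?_⟩
  · intro hdr
    rcases Nat.lt_or_ge m 5 with h5 | h5
    · have hn4 : n ≤ 4 := by omega
      have hm4 : m ≤ 4 := by omega
      interval_cases n <;> interval_cases m
      · exact Or.inl ⟨rfl, rfl⟩
      · exact absurd hdr not_dr23
      · exact Or.inr (Or.inl ⟨rfl, rfl⟩)
      · exact Or.inr (Or.inr (Or.inl ⟨rfl, rfl⟩))
      · exact absurd hdr not_dr34
      · exact Or.inr (Or.inr (Or.inr ⟨rfl, rfl⟩))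
    · exact absurd hdr (not_dr_m5 hn h5)
  · rintro (⟨rfl, rfl⟩ | ⟨rfl, rfl⟩ | ⟨rfl, rfl⟩ | ⟨rfl, rfl⟩)
    exacts [dr22, dr24, dr33, dr44]
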